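/- Let Φ be a Young function, 0 < q < ∞, and E ⊂ ℝⁿ a measurable set of finite positive measure. Then ‖χ_E‖_{L^{Φ,q}} ≥ q^{-1/q}·Φ⁻¹(1/|E|)^{-1}, where ‖χ_E‖_{L^{Φ,q}} = (∫₀^{|E|} Φ⁻¹(1/t)^{-q} dt/t)^{1/q}. -/

import Mathlib

open MeasureTheory ENNReal NNReal

noncomputable section

/-- A Young function `Φ : [0,∞] → [0,∞]`: increasing, convex, `Φ(0)=0`, `Φ(∞)=∞`,
`lim_{t→0}Φ(t)=0`, with `a(Φ)<∞` and `b(Φ)>0`. -/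
structure YoungFunction (Φ : ℝ≥0∞ → ℝ≥0∞) : Prop where
  mono : Monotone Φ
  map_zero : Φ 0 = 0
  map_top : Φ ⊤ = ⊤
  convex : ∀ (a b : ℝ≥0) (x y : ℝ≥0∞), a + b = 1 →
    Φ ((a : ℝ≥0∞) * x + (b : ℝ≥0∞) * y) ≤ (a : ℝ≥0∞) * Φ x + (b : ℝ≥0∞) * Φ y
  tendsto_zero : Filter.Tendsto Φ (nhdsWithin 0 (Set.Ioi 0)) (nhds 0)
  exists_pos : ∃ t : ℝ≥0∞, t ≠ ⊤ ∧ 0 < Φ t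
  exists_finite : ∃ t : ℝ≥0∞, 0 < t ∧ Φ t < ⊤

/-- The generalized inverse `Φ⁻¹(u) = inf{t ≥ 0 : Φ(t) > u}` (with `inf ∅ = ∞`,
so `Φ⁻¹(∞) = ∞`). -/
def yinv (Φ : ℝ≥0∞ → ℝ≥0∞) (u : ℝ≥0∞) : ℝ≥0∞ := sInf {t | u < Φ t}

/-- Superadditivity of a Young function: `l·Φ(s) ≤ Φ(l·s)` for `l ≥ 1`. -/
lemma young_mul_le {Φ : ℝ≥0∞ → ℝ≥0∞} (hΦ : YoungFunction Φ) {l : ℝ≥0} (hl : 1 ≤ l)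
    (s : ℝ≥0∞) : (l : ℝ≥0∞) * Φ s ≤ Φ ((l : ℝ≥0∞) * s) := by
  have hl0 : l ≠ 0 := by intro h; rw [h] at hl; exact absurd hl (by norm_num)
  have hab : l⁻¹ + (1 - l⁻¹) = 1 := add_tsub_cancel_of_le (by exact inv_le_one_of_one_le₀ hl)
  have key := hΦ.convex l⁻¹ (1 - l⁻¹) ((l : ℝ≥0∞) * s) 0 hab
  simp only [hΦ.map_zero, mul_zero, add_zero, ← mul_assoc] at key
  rw [show ((l⁻¹ : ℝ≥0) : ℝ≥0∞) * (l : ℝ≥0∞) = 1 by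
    rw [← ENNReal.coe_mul, inv_mul_cancel₀ hl0, ENNReal.coe_one], one_mul] at key
  calc (l : ℝ≥0∞) * Φ s ≤ (l : ℝ≥0∞) * (((l⁻¹ : ℝ≥0) : ℝ≥0∞) * Φ ((l : ℝ≥0∞) * s)) :=
        by gcongr
    _ = Φ ((l : ℝ≥0∞) * s) := by
        rw [← mul_assoc, ← ENNReal.coe_mul, mul_inv_cancel₀ hl0, ENNReal.coe_one, one_mul]

/-- The generalized inverse is positive at positive arguments. -/
lemma yinv_pos {Φ : ℝ≥0∞ → ℝ≥0∞} (hΦ : YoungFunction Φ) {v : ℝ≥0∞} (hv : 0 < v) :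
    0 < yinv Φ v := by
  have h : {t : ℝ≥0∞ | Φ t < v} ∈ nhdsWithin 0 (Set.Ioi 0) :=
    hΦ.tendsto_zero (Iio_mem_nhds hv)
  rw [mem_nhdsWithin] at h
  obtain ⟨U, hU, h0U, hsub⟩ := h
  obtain ⟨ε, hε, hIio⟩ := ENNReal.nhds_zero_basis.mem_iff.1 (hU.mem_nhds h0U)
  refine lt_of_lt_of_le hε (le_sInf fun s hs => ?_)
  by_contra hc
  push_neg at hc
  have hs0 : s ≠ 0 := by
    intro h0; rw [Set.mem_setOf_eq, h0, hΦ.map_zero] at hs; exact absurd hs (not_lt.2 hv.le)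
  have : Φ s < v := hsub ⟨hIio hc, pos_iff_ne_zero.2 hs0⟩
  exact absurd hs (not_lt.2 this.le)

/-- Quasi-homogeneity of the generalized inverse: `Φ⁻¹(u) ≤ (u/v)·Φ⁻¹(v)` for `v ≤ u`. -/
lemma yinv_le_div_mul {Φ : ℝ≥0∞ → ℝ≥0∞} (hΦ : YoungFunction Φ) {u v : ℝ≥0∞}
    (hv : 0 < v) (hvu : v ≤ u) (hu : u ≠ ⊤) :
    yinv Φ u ≤ (u / v) * yinv Φ v := by
  have hvt : v ≠ ⊤ := (lt_of_le_of_lt hvu hu.lt_top).ne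
  have hrt : u / v ≠ ⊤ := (ENNReal.div_lt_top hu hv.ne').ne
  have hr1 : 1 ≤ u / v := by
    rw [ENNReal.le_div_iff_mul_le (Or.inl hv.ne') (Or.inl hvt), one_mul]; exact hvu
  set l : ℝ≥0 := (u / v).toNNReal with hl
  have hlr : (l : ℝ≥0∞) = u / v := ENNReal.coe_toNNReal hrt
  have hl1 : 1 ≤ l := by
    rw [← ENNReal.one_le_coe_iff, hlr]; exact hr1
  have hl0 : (l : ℝ≥0∞) ≠ 0 := by
    simp only [ne_eq, ENNReal.coe_eq_zero]
    intro h; rw [h] at hl1; exact absurd hl1 (by norm_num)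
  have hlt : (l : ℝ≥0∞) ≠ ⊤ := ENNReal.coe_ne_top
  rw [← hlr]
  have key : ∀ s ∈ {t : ℝ≥0∞ | v < Φ t}, ((l : ℝ≥0∞))⁻¹ * yinv Φ u ≤ s := by
    intro s hs
    have hmem : (l : ℝ≥0∞) * s ∈ {t : ℝ≥0∞ | u < Φ t} := by
      have hlv : (l : ℝ≥0∞) * v = u := by
        rw [hlr]; exact ENNReal.div_mul_cancel hv.ne' hvt
      have h1 : u < (l : ℝ≥0∞) * Φ s := by
        rw [← hlv]; exact ENNReal.mul_lt_mul_right hl0 hlt hs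
      exact h1.trans_le (young_mul_le hΦ hl1 s)
    have h2 : yinv Φ u ≤ (l : ℝ≥0∞) * s := sInf_le hmem
    calc ((l : ℝ≥0∞))⁻¹ * yinv Φ u ≤ ((l : ℝ≥0∞))⁻¹ * ((l : ℝ≥0∞) * s) :=
          by gcongr
      _ = s := by rw [← mul_assoc, ENNReal.inv_mul_cancel hl0 hlt, one_mul]
  have h3 : ((l : ℝ≥0∞))⁻¹ * yinv Φ u ≤ yinv Φ v := le_sInf key
  calc yinv Φ u = (l : ℝ≥0∞) * (((l : ℝ≥0∞))⁻¹ * yinv Φ u) := by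
        rw [← mul_assoc, ENNReal.mul_inv_cancel hl0 hlt, one_mul]
    _ ≤ (l : ℝ≥0∞) * yinv Φ v := by gcongr

/-- `∫₀ᵀ t^{q-1} dt = T^q/q`. -/
lemma lint_rpow {T q : ℝ} (hT : 0 < T) (hq : 0 < q) :
    ∫⁻ t in Set.Ioo (0 : ℝ) T, ENNReal.ofReal (t ^ (q - 1)) = ENNReal.ofReal (T ^ q / q) := by
  have hint : IntegrableOn (fun t : ℝ => t ^ (q - 1)) (Set.Ioo 0 T) := by
    rw [← intervalIntegrable_iff_integrableOn_Ioo_of_le hT.le]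
    exact intervalIntegral.intervalIntegrable_rpow' (by linarith)
  have hnn : 0 ≤ᵐ[volume.restrict (Set.Ioo (0:ℝ) T)] fun t : ℝ => t ^ (q - 1) :=
    (ae_restrict_iff' measurableSet_Ioo).2
      (ae_of_all _ fun x hx => Real.rpow_nonneg hx.1.le _)
  rw [← ofReal_integral_eq_lintegral_ofReal hint hnn]
  congr 1
  rw [← integral_Ioc_eq_integral_Ioo, ← intervalIntegral.integral_of_le hT.le,
    integral_rpow (Or.inl (by linarith))]
  rw [Real.zero_rpow (by linarith : q - 1 + 1 ≠ 0)]
  ring_nf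

/-- lower bound for the Orlicz-Lorentz quasi-norm of an indicator. -/
theorem stmt8 (Φ : ℝ≥0∞ → ℝ≥0∞) (hΦ : YoungFunction Φ) (n : ℕ) (q : ℝ) (hq : 0 < q)
    (E : Set (EuclideanSpace ℝ (Fin n))) (hE : MeasurableSet E)
    (hE0 : 0 < volume E) (hEfin : volume E ≠ ⊤) :
    ENNReal.ofReal (q ^ (-(1 / q))) * (yinv Φ (volume E)⁻¹)⁻¹ ≤
      (∫⁻ t in Set.Ioo (0 : ℝ) (volume E).toReal,
        (yinv Φ (ENNReal.ofReal t)⁻¹) ^ (-q) * (ENNReal.ofReal t)⁻¹) ^ (1 / q) := by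
  set V : ℝ≥0∞ := volume E with hV
  set T : ℝ := V.toReal with hT
  have hT0 : 0 < T := ENNReal.toReal_pos hE0.ne' hEfin
  have hVT : ENNReal.ofReal T = V := ENNReal.ofReal_toReal hEfin
  set c : ℝ≥0∞ := yinv Φ V⁻¹ with hc
  by_cases hctop : c = ⊤
  · rw [hctop]; simp
  have hc0 : 0 < c := yinv_pos hΦ (ENNReal.inv_pos.2 hEfin)
  have hcq_top : c ^ (-q) ≠ ⊤ := by
    rw [ENNReal.rpow_neg]
    exact ENNReal.inv_ne_top.2 (ENNReal.rpow_pos hc0 hctop).ne'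
  have hVq_top : V ^ (-q) ≠ ⊤ := by
    rw [ENNReal.rpow_neg]
    exact ENNReal.inv_ne_top.2 (ENNReal.rpow_pos hE0 hEfin).ne'
  -- pointwise bound on the integrand
  have hpt : ∀ t ∈ Set.Ioo (0 : ℝ) T,
      c ^ (-q) * V ^ (-q) * ENNReal.ofReal (t ^ (q - 1)) ≤
        (yinv Φ (ENNReal.ofReal t)⁻¹) ^ (-q) * (ENNReal.ofReal t)⁻¹ := by
    intro t ht
    have ht0 : (0 : ℝ) < t := ht.1
    have hot0 : ENNReal.ofReal t ≠ 0 := (ENNReal.ofReal_pos.2 ht0).ne'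
    have hottop : ENNReal.ofReal t ≠ ⊤ := ENNReal.ofReal_ne_top
    have hoinv_top : (ENNReal.ofReal t)⁻¹ ≠ ⊤ := ENNReal.inv_ne_top.2 hot0
    have hlt : ENNReal.ofReal t ≤ V := by
      rw [← hVT]; exact ENNReal.ofReal_le_ofReal ht.2.le
    have hkey : yinv Φ (ENNReal.ofReal t)⁻¹ ≤ ((ENNReal.ofReal t)⁻¹ / V⁻¹) * c :=
      yinv_le_div_mul hΦ (ENNReal.inv_pos.2 hEfin)
        (ENNReal.inv_le_inv.2 hlt) hoinv_top
    have hdiv : (ENNReal.ofReal t)⁻¹ / V⁻¹ = V * (ENNReal.ofReal t)⁻¹ := by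
      rw [ENNReal.div_eq_inv_mul, inv_inv, mul_comm]
    rw [hdiv] at hkey
    have hmono : (V * (ENNReal.ofReal t)⁻¹ * c) ^ (-q) ≤
        (yinv Φ (ENNReal.ofReal t)⁻¹) ^ (-q) := by
      rw [ENNReal.rpow_neg, ENNReal.rpow_neg]
      exact ENNReal.inv_le_inv.2 (ENNReal.rpow_le_rpow hkey hq.le)
    refine le_trans (le_of_eq ?_) (mul_le_mul_of_nonneg_right hmono zero_le)
    have h1 : (V * (ENNReal.ofReal t)⁻¹ * c) ^ (-q) =
        V ^ (-q) * ((ENNReal.ofReal t)⁻¹) ^ (-q) * c ^ (-q) := by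
      rw [ENNReal.mul_rpow_of_ne_top (ENNReal.mul_ne_top hEfin hoinv_top) hctop,
        ENNReal.mul_rpow_of_ne_top hEfin hoinv_top]
    have h2 : ((ENNReal.ofReal t)⁻¹) ^ (-q) = (ENNReal.ofReal t) ^ q := by
      rw [ENNReal.inv_rpow, ENNReal.rpow_neg, inv_inv]
    have h3 : ENNReal.ofReal (t ^ (q - 1)) =
        (ENNReal.ofReal t) ^ q * (ENNReal.ofReal t)⁻¹ := by
      rw [← ENNReal.ofReal_rpow_of_pos ht0, show q - 1 = q + (-1) by ring,
        ENNReal.rpow_add _ _ hot0 hottop, ENNReal.rpow_neg_one]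
    rw [h1, h2, h3]
    ring
  -- integrate the bound
  have hle : c ^ (-q) * ENNReal.ofReal q⁻¹ ≤
      ∫⁻ t in Set.Ioo (0 : ℝ) T,
        (yinv Φ (ENNReal.ofReal t)⁻¹) ^ (-q) * (ENNReal.ofReal t)⁻¹ := by
    have hI : ∫⁻ t in Set.Ioo (0 : ℝ) T,
        c ^ (-q) * V ^ (-q) * ENNReal.ofReal (t ^ (q - 1)) =
        c ^ (-q) * V ^ (-q) * ENNReal.ofReal (T ^ q / q) := by
      rw [lintegral_const_mul' _ _ (ENNReal.mul_ne_top hcq_top hVq_top), lint_rpow hT0 hq]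
    have hval : c ^ (-q) * V ^ (-q) * ENNReal.ofReal (T ^ q / q) =
        c ^ (-q) * ENNReal.ofReal q⁻¹ := by
      rw [div_eq_mul_inv, ENNReal.ofReal_mul (Real.rpow_nonneg hT0.le _),
        ← ENNReal.ofReal_rpow_of_pos hT0, hVT]
      calc c ^ (-q) * V ^ (-q) * (V ^ q * ENNReal.ofReal q⁻¹)
          = c ^ (-q) * (V ^ (-q) * V ^ q) * ENNReal.ofReal q⁻¹ := by ring
        _ = c ^ (-q) * ENNReal.ofReal q⁻¹ := by
            rw [← ENNReal.rpow_add _ _ hE0.ne' hEfin, neg_add_cancel, ENNReal.rpow_zero,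
              mul_one]
    rw [← hval, ← hI]
    exact setLIntegral_mono' measurableSet_Ioo hpt
  calc ENNReal.ofReal (q ^ (-(1 / q))) * c⁻¹
      = (c ^ (-q) * ENNReal.ofReal q⁻¹) ^ (1 / q) := by
        rw [ENNReal.mul_rpow_of_ne_top hcq_top ENNReal.ofReal_ne_top,
          ← ENNReal.rpow_mul, show -q * (1 / q) = -1 by field_simp,
          ENNReal.rpow_neg_one, ENNReal.ofReal_rpow_of_pos (inv_pos.2 hq),
          ← Real.rpow_neg_one q, ← Real.rpow_mul hq.le,
          show (-1 : ℝ) * (1 / q) = -(1 / q) by ring, mul_comm]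
    _ ≤ _ := ENNReal.rpow_le_rpow hle (by positivity)
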